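/- In the cases F4^(1) and E6^(2), the unique i-sequence is (2,3,4) and the unique j-sequence is (2,3). In the cases E6^(1), E7^(1), E8^(1), any two i-sequences have the same length and can be obtained from one another by finitely many transpositions of adjacent entries i_k, i_{k+1} with c_{i_k i_{k+1}} = 0 (i.e., they lie in the same commutation class), and the same holds for any two j-sequences. -/

import Mathlib

/-- The five affine types considered in the paper. -/
inductive AffCase : Type
  | E6 | E7 | E8 | F4 | E62
  deriving DecidableEq

open AffCase

/-- The rank `n` of the underlying finite-type algebra `g_0`. -/
def rank : AffCase → ℕ
  | E6 => 6 | E7 => 7 | E8 => 8 | F4 => 4 | E62 => 4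

/-- Edges of the Dynkin diagram of `g_0`. -/
def adj : AffCase → List (ℕ × ℕ)
  | E6  => [(1,2),(2,3),(2,4),(3,5),(4,6)]
  | E7  => [(1,2),(2,3),(3,4),(3,5),(5,6),(6,7)]
  | E8  => [(1,2),(2,3),(3,4),(4,5),(5,6),(5,7),(7,8)]
  | F4  => [(1,2),(2,3),(3,4)]
  | E62 => [(1,2),(2,3),(3,4)]

/-- The Cartan matrix `c_{ij}` of `g_0`. -/
def cartan (c : AffCase) (i j : ℕ) : ℤ :=
  if i = j then 2
  else if (i, j) ∈ adj c ∨ (j, i) ∈ adj c then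
    if (c = F4 ∧ i = 3 ∧ j = 2) ∨ (c = E62 ∧ i = 2 ∧ j = 3) then -2 else -1
  else 0

/-- The index set `I_0 = {1,…,n}`. -/
def I0 (c : AffCase) : Finset ℕ := Finset.Icc 1 (rank c)

/-- The index set `I_{01} = I_0 \ {1} = {2,…,n}`. -/
def I01 (c : AffCase) : Finset ℕ := Finset.Icc 2 (rank c)

/-- The constant `c` : `2` in case `F4^(1)`, `1` otherwise. -/
def cconst : AffCase → ℤ
  | F4 => 2
  | _ => 1

/-- The pairing `⟨h_i, v⟩ = Σ_j c_{ij} v_j`. -/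
def pairing (c : AffCase) (i : ℕ) (v : ℕ → ℤ) : ℤ :=
  ∑ j ∈ I0 c, cartan c i j * v j

/-- The standard basis vector `e_i` of the root lattice. -/
def stdb (i : ℕ) : ℕ → ℤ := fun j => if j = i then 1 else 0

/-- The simple reflection `σ_i(v) = v − ⟨h_i, v⟩ e_i`. -/
def sref (c : AffCase) (i : ℕ) (v : ℕ → ℤ) : ℕ → ℤ :=
  fun j => v j - if j = i then pairing c i v else 0

/-- `srefs c f k v = σ_{f k} ⋯ σ_{f 1} (v)` (note: `f 0` is not applied). -/
def srefs (c : AffCase) (f : ℕ → ℕ) : ℕ → (ℕ → ℤ) → (ℕ → ℤ)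
  | 0, v => v
  | k+1, v => sref c (f (k+1)) (srefs c f k v)

/-- The root `θ_1`. -/
def theta1 (c : AffCase) : ℕ → ℤ := fun j =>
  (match c with
    | E6  => ([0,0,1,1,1,1,1] : List ℤ)
    | E7  => ([0,0,1,2,1,2,2,1] : List ℤ)
    | E8  => ([0,0,1,2,3,4,2,3,2] : List ℤ)
    | F4  => ([0,0,1,2,2] : List ℤ)
    | E62 => ([0,0,1,1,1] : List ℤ)).getD j 0

/-- The subset `J ⊆ I_0`. -/
def Jset : AffCase → Finset ℕ
  | E6  => {2,3,4}
  | E7  => {2,3,4,5}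
  | E8  => {2,3,4,5,6,7}
  | F4  => {2,3}
  | E62 => {2,3}

/-- The root `θ_J`. -/
def thetaJ (c : AffCase) : ℕ → ℤ := fun j =>
  (match c with
    | E6  => ([0,0,1,1,1,0,0] : List ℤ)
    | E7  => ([0,0,1,2,1,1,0,0] : List ℤ)
    | E8  => ([0,0,1,2,2,2,1,1,0] : List ℤ)
    | F4  => ([0,0,1,2,0] : List ℤ)
    | E62 => ([0,0,1,1,0] : List ℤ)).getD j 0

/-- `(L, f)` encodes an i-sequence `(i_0, …, i_L) = (f 0, …, f L)`. -/
def IsISeq (c : AffCase) (L : ℕ) (f : ℕ → ℕ) : Prop :=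
  (∀ k ≤ L, f k ∈ I01 c) ∧ f 0 = 2 ∧
  (∀ k, 1 ≤ k → k ≤ L →
    pairing c (f k) (srefs c f (k-1) (stdb 2)) = -(cconst c)) ∧
  srefs c f L (stdb 2) = theta1 c

/-- `(L, f)` encodes a j-sequence `(j_0, …, j_L) = (f 0, …, f L)`. -/
def IsJSeq (c : AffCase) (L : ℕ) (f : ℕ → ℕ) : Prop :=
  (∀ k ≤ L, f k ∈ Jset c) ∧ f 0 = 2 ∧
  (∀ k, 1 ≤ k → k ≤ L →
    pairing c (f k) (srefs c f (k-1) (stdb 2)) = -(cconst c)) ∧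
  srefs c f L (stdb 2) = thetaJ c

/-- The list `[i_0, i_1, …, i_L]` is an i-sequence. -/
def IsISeqL (c : AffCase) (l : List ℕ) : Prop :=
  ∃ L : ℕ, l.length = L + 1 ∧ IsISeq c L (fun k => l.getD k 0)

/-- The list `[j_0, j_1, …, j_{L'}]` is a j-sequence. -/
def IsJSeqL (c : AffCase) (l : List ℕ) : Prop :=
  ∃ L : ℕ, l.length = L + 1 ∧ IsJSeq c L (fun k => l.getD k 0)

/-- One transposition of two adjacent commuting entries (`c_{ab} = 0`). -/
def CommStep (c : AffCase) (l l' : List ℕ) : Prop :=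
  ∃ (u v : List ℕ) (a b : ℕ), cartan c a b = 0 ∧
    l = u ++ a :: b :: v ∧ l' = u ++ b :: a :: v

/-! ### Auxiliary machinery -/

set_option maxRecDepth 40000

def vadd (cc : ℤ) (i : ℕ) (v : ℕ → ℤ) : ℕ → ℤ := fun j => if j = i then v j + cc else v j

def nodesExt (c : AffCase) (letters : List ℕ) (x : List ℕ × (ℕ → ℤ)) :
    List (List ℕ × (ℕ → ℤ)) :=
  letters.filterMap fun i =>
    if pairing c i x.2 = -(cconst c) then some (x.1 ++ [i], vadd (cconst c) i x.2) else none

def levels (c : AffCase) (letters : List ℕ) : ℕ → List (List ℕ × (ℕ → ℤ))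
  | 0 => [([2], stdb 2)]
  | k+1 => (levels c letters k).flatMap (nodesExt c letters)

lemma sref_of_pairing {c : AffCase} {i : ℕ} {v : ℕ → ℤ}
    (h : pairing c i v = -(cconst c)) : sref c i v = vadd (cconst c) i v := by
  funext j
  simp only [sref, vadd]
  split
  · rw [h]; ring
  · ring

lemma levels_mem (c : AffCase) (letters : List ℕ) (f : ℕ → ℕ) (hf0 : f 0 = 2) :
    ∀ L, (∀ k, 1 ≤ k → k ≤ L → f k ∈ letters) →
    (∀ k, 1 ≤ k → k ≤ L → pairing c (f k) (srefs c f (k-1) (stdb 2)) = -(cconst c)) →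
    ((List.range (L+1)).map f, srefs c f L (stdb 2)) ∈ levels c letters L := by
  intro L
  induction L with
  | zero =>
      intro _ _
      simp [levels, srefs, List.range_succ, hf0]
  | succ n ih =>
      intro hlet hp
      have hmem := ih (fun k h1 h2 => hlet k h1 (h2.trans (Nat.le_succ n)))
                      (fun k h1 h2 => hp k h1 (h2.trans (Nat.le_succ n)))
      have hpn : pairing c (f (n+1)) (srefs c f n (stdb 2)) = -(cconst c) := by
        have := hp (n+1) (by omega) le_rfl
        simpa using this
      simp only [levels, List.mem_flatMap]
      refine ⟨_, hmem, ?_⟩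
      simp only [nodesExt, List.mem_filterMap]
      refine ⟨f (n+1), hlet (n+1) (by omega) le_rfl, ?_⟩
      rw [if_pos hpn]
      congr 1
      refine Prod.ext ?_ ?_
      · show (List.range (n+1)).map f ++ [f (n+1)] = (List.range (n+1+1)).map f
        conv_rhs => rw [List.range_succ]
        rw [List.map_append]
        rfl
      · show vadd (cconst c) (f (n+1)) (srefs c f n (stdb 2)) = srefs c f (n+1) (stdb 2)
        rw [show srefs c f (n+1) (stdb 2) = sref c (f (n+1)) (srefs c f n (stdb 2)) from rfl,
          sref_of_pairing hpn]

lemma range_map_getD (l : List ℕ) :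
    (List.range l.length).map (fun k => l.getD k 0) = l := by
  apply List.ext_getElem
  · simp
  · intro i h1 h2
    simp only [List.getElem_map, List.getElem_range]
    rw [List.getD_eq_getElem l 0 h2]

lemma sum_vadd (c : AffCase) (cc : ℤ) (i : ℕ) (v : ℕ → ℤ) (hi : i ∈ I0 c) :
    ∑ j ∈ I0 c, vadd cc i v j = cc + ∑ j ∈ I0 c, v j := by
  have h1 : ∀ j ∈ I0 c, vadd cc i v j = v j + (if j = i then cc else 0) := by
    intro j _; simp only [vadd]; split <;> simp
  rw [Finset.sum_congr rfl h1, Finset.sum_add_distrib,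
    Finset.sum_ite_eq' (I0 c) i fun _ => cc, if_pos hi]
  ring

lemma srefs_sum (c : AffCase) (f : ℕ → ℕ) :
    ∀ L : ℕ, (∀ k, 1 ≤ k → k ≤ L → f k ∈ I0 c) →
    (∀ k, 1 ≤ k → k ≤ L → pairing c (f k) (srefs c f (k-1) (stdb 2)) = -(cconst c)) →
    ∑ j ∈ I0 c, srefs c f L (stdb 2) j = 1 + cconst c * (L : ℤ) := by
  intro L
  induction L with
  | zero =>
      intro _ _
      show ∑ j ∈ I0 c, stdb 2 j = 1 + cconst c * ((0:ℕ) : ℤ)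
      push_cast
      rw [mul_zero, add_zero]
      cases c <;> decide
  | succ n ih =>
      intro hI hp
      have hpn : pairing c (f (n+1)) (srefs c f n (stdb 2)) = -(cconst c) := by
        have := hp (n+1) (by omega) le_rfl
        simpa using this
      have hstep : srefs c f (n+1) (stdb 2) = vadd (cconst c) (f (n+1)) (srefs c f n (stdb 2)) := by
        rw [show srefs c f (n+1) (stdb 2) = sref c (f (n+1)) (srefs c f n (stdb 2)) from rfl,
          sref_of_pairing hpn]
      rw [hstep, sum_vadd c _ _ _ (hI (n+1) (by omega) le_rfl),
        ih (fun k h1 h2 => hI k h1 (h2.trans (Nat.le_succ n)))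
           (fun k h1 h2 => hp k h1 (h2.trans (Nat.le_succ n)))]
      push_cast
      ring

lemma srefs_apply_ne (c : AffCase) (f : ℕ → ℕ) (v : ℕ → ℤ) (j : ℕ) :
    ∀ L : ℕ, (∀ k, 1 ≤ k → k ≤ L → f k ≠ j) → srefs c f L v j = v j := by
  intro L
  induction L with
  | zero => intro _; rfl
  | succ n ih =>
      intro h
      show srefs c f n v j - (if j = f (n+1) then _ else 0) = v j
      rw [if_neg (fun hh => h (n+1) (by omega) le_rfl hh.symm), sub_zero,
        ih (fun k h1 h2 => h k h1 (h2.trans (Nat.le_succ n)))]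

lemma final_ext (c : AffCase) (L : ℕ) (f : ℕ → ℕ) (t : ℕ → ℤ)
    (h1 : ∀ j ≤ rank c, srefs c f L (stdb 2) j = t j)
    (h2 : ∀ k, 1 ≤ k → k ≤ L → f k ≤ rank c)
    (h3 : ∀ j, rank c < j → t j = 0) :
    srefs c f L (stdb 2) = t := by
  have hr : 2 ≤ rank c := by cases c <;> decide
  funext j
  rcases le_or_gt j (rank c) with h | h
  · exact h1 j h
  · rw [srefs_apply_ne c f (stdb 2) j L (fun k hk1 hk2 => by have := h2 k hk1 hk2; omega),
      h3 j h]
    have : j ≠ 2 := by omega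
    simp [stdb, this]

lemma theta1_vanish (c : AffCase) : ∀ j, rank c < j → theta1 c j = 0 := by
  intro j hj
  cases c <;>
    (simp only [theta1]
     refine List.getD_eq_default _ _ ?_
     simp only [rank] at hj
     simp
     omega)

lemma thetaJ_vanish (c : AffCase) : ∀ j, rank c < j → thetaJ c j = 0 := by
  intro j hj
  cases c <;>
    (simp only [thetaJ]
     refine List.getD_eq_default _ _ ?_
     simp only [rank] at hj
     simp
     omega)

def swapsOf (c : AffCase) : List ℕ → List (List ℕ)
  | [] => []
  | [_] => []
  | a :: b :: t =>
      (if cartan c a b = 0 then [b :: a :: t] else []) ++ (swapsOf c (b :: t)).map (a :: ·)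

def chainOK (c : AffCase) : List (List ℕ) → List (List ℕ) → Bool
  | _, [] => true
  | seen, x :: rest =>
      seen.any (fun p => decide (x ∈ swapsOf c p)) && chainOK c (x :: seen) rest

lemma swapsOf_sound (c : AffCase) : ∀ l l', l' ∈ swapsOf c l → CommStep c l l' := by
  intro l
  induction l with
  | nil => intro l' h; simp [swapsOf] at h
  | cons a t ih =>
      cases t with
      | nil => intro l' h; simp [swapsOf] at h
      | cons b t2 =>
          intro l' h
          simp only [swapsOf, List.mem_append] at h
          rcases h with h | h
          · by_cases hz : cartan c a b = 0
            · rw [if_pos hz] at h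
              simp only [List.mem_singleton] at h
              subst h
              exact ⟨[], t2, a, b, hz, rfl, rfl⟩
            · rw [if_neg hz] at h
              simp at h
          · rcases List.mem_map.1 h with ⟨m, hm, rfl⟩
            obtain ⟨u, v, x, y, hz, h1, h2⟩ := ih m hm
            exact ⟨a :: u, v, x, y, hz, by rw [h1]; rfl, by rw [h2]; rfl⟩

lemma cartan_zero_symm {c : AffCase} {a b : ℕ} (h : cartan c a b = 0) : cartan c b a = 0 := by
  unfold cartan at h ⊢
  by_cases h1 : a = b
  · rw [if_pos h1] at h; omega
  by_cases h2 : (a, b) ∈ adj c ∨ (b, a) ∈ adj c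
  · rw [if_neg h1, if_pos h2] at h
    split at h <;> omega
  · rw [if_neg (fun hh => h1 hh.symm), if_neg (fun hh => h2 (Or.symm hh))]

lemma commStep_symm {c : AffCase} {l l' : List ℕ} (h : CommStep c l l') : CommStep c l' l := by
  obtain ⟨u, v, a, b, hz, h1, h2⟩ := h
  exact ⟨u, v, b, a, cartan_zero_symm hz, h2, h1⟩

lemma chain_sound (c : AffCase) (root : List ℕ) :
    ∀ rest seen, (∀ p ∈ seen, Relation.ReflTransGen (CommStep c) root p) →
      chainOK c seen rest = true →
      ∀ x ∈ rest, Relation.ReflTransGen (CommStep c) root x := by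
  intro rest
  induction rest with
  | nil => simp
  | cons y t ih =>
      intro seen hseen hOK x hx
      rw [chainOK, Bool.and_eq_true] at hOK
      obtain ⟨h1, h2⟩ := hOK
      obtain ⟨p, hp, hswap⟩ := List.any_eq_true.1 h1
      have hy : Relation.ReflTransGen (CommStep c) root y :=
        (hseen p hp).tail (swapsOf_sound c p y (of_decide_eq_true hswap))
      rcases List.mem_cons.1 hx with rfl | hx'
      · exact hy
      · exact ih (y :: seen)
          (fun q hq => by
            rcases List.mem_cons.1 hq with rfl | hq'
            · exact hy
            · exact hseen q hq') h2 x hx'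

lemma connect (c : AffCase) (r : List ℕ) (rest : List (List ℕ))
    (hchain : chainOK c [r] rest = true)
    {l l' : List ℕ} (hl : l ∈ r :: rest) (hl' : l' ∈ r :: rest) :
    Relation.ReflTransGen (CommStep c) l l' := by
  have key : ∀ x ∈ r :: rest, Relation.ReflTransGen (CommStep c) r x := by
    intro x hx
    rcases List.mem_cons.1 hx with rfl | hx'
    · exact Relation.ReflTransGen.refl
    · exact chain_sound c r rest [r]
        (fun p hp => by rcases List.mem_singleton.1 hp with rfl; exact Relation.ReflTransGen.refl)
        hchain x hx'
  exact (show Relation.ReflTransGen (CommStep c) l r by haveI : Std.Symm (CommStep c) := ⟨fun _ _ h => commStep_symm h⟩; exact Std.Symm.symm _ _ (key l hl)).trans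
    (key l' hl')

lemma master (c : AffCase) (letters : List ℕ) (S : Finset ℕ) (L0 : ℕ) (t : ℕ → ℤ)
    (ord : List (List ℕ))
    (hSsub : ∀ i, i ∈ S → i ∈ I0 c)
    (hSlet : ∀ i, i ∈ S → i ∈ letters)
    (hcpos : cconst c ≠ 0)
    (hsumt : ∑ j ∈ I0 c, t j = 1 + cconst c * (L0 : ℤ))
    (hall : (((levels c letters L0).map Prod.fst).all (· ∈ ord)) = true)
    {l : List ℕ} {L : ℕ} (hlen : l.length = L + 1)
    (hS : ∀ k ≤ L, l.getD k 0 ∈ S) (h0 : l.getD 0 0 = 2)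
    (hp : ∀ k, 1 ≤ k → k ≤ L →
      pairing c (l.getD k 0) (srefs c (fun k => l.getD k 0) (k-1) (stdb 2)) = -(cconst c))
    (hfin : srefs c (fun k => l.getD k 0) L (stdb 2) = t) :
    l ∈ ord ∧ l.length = L0 + 1 := by
  set f : ℕ → ℕ := fun k => l.getD k 0 with hf
  have hsum := srefs_sum c f L (fun k _ h2 => hSsub _ (hS k h2)) hp
  rw [hfin, hsumt] at hsum
  have hLL : L = L0 := by
    have := mul_left_cancel₀ hcpos (by linarith : cconst c * (L0 : ℤ) = cconst c * (L : ℤ))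
    exact_mod_cast this.symm
  subst hLL
  have hmem := levels_mem c letters f h0 L (fun k _ h2 => hSlet _ (hS k h2)) hp
  have hmem2 : l ∈ (levels c letters L).map Prod.fst := by
    have := List.mem_map_of_mem (f := Prod.fst) hmem
    rwa [show (List.range (L+1)).map f = l by rw [← hlen]; exact range_map_getD l] at this
  exact ⟨of_decide_eq_true (List.all_eq_true.1 hall l hmem2), hlen⟩
def ordI_E6 : List (List ℕ) := [[2,3,4,5,6],[2,4,3,5,6],[2,3,5,4,6],[2,3,4,6,5],[2,4,3,6,5],[2,4,6,3,5]]

def ordJ_E6 : List (List ℕ) := [[2,3,4],[2,4,3]]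

def ordI_E7 : List (List ℕ) := [[2,3,4,5,3,6,5,7,6],[2,3,5,4,3,6,5,7,6],[2,3,4,5,6,3,5,7,6],[2,3,4,5,3,6,7,5,6],[2,3,5,4,6,3,5,7,6],[2,3,5,4,3,6,7,5,6],[2,3,4,5,6,3,7,5,6],[2,3,5,6,4,3,5,7,6],[2,3,5,4,6,3,7,5,6],[2,3,4,5,6,7,3,5,6],[2,3,5,6,4,3,7,5,6],[2,3,5,4,6,7,3,5,6],[2,3,5,6,4,7,3,5,6],[2,3,5,6,7,4,3,5,6]]

def ordJ_E7 : List (List ℕ) := [[2,3,4,5,3],[2,3,5,4,3]]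

def ordI_E8 : List (List ℕ) := [[2,3,4,5,6,7,5,4,3,8,7,5,4,6,5,7,8],[2,3,4,5,7,6,5,4,3,8,7,5,4,6,5,7,8],[2,3,4,5,6,7,5,4,8,3,7,5,4,6,5,7,8],[2,3,4,5,6,7,5,4,3,8,7,5,6,4,5,7,8],[2,3,4,5,7,6,5,4,8,3,7,5,4,6,5,7,8],[2,3,4,5,7,6,5,4,3,8,7,5,6,4,5,7,8],[2,3,4,5,6,7,5,8,4,3,7,5,4,6,5,7,8],[2,3,4,5,6,7,5,4,8,7,3,5,4,6,5,7,8],[2,3,4,5,6,7,5,4,8,3,7,5,6,4,5,7,8],[2,3,4,5,7,6,5,8,4,3,7,5,4,6,5,7,8],[2,3,4,5,7,6,5,4,8,7,3,5,4,6,5,7,8],[2,3,4,5,7,6,5,4,8,3,7,5,6,4,5,7,8],[2,3,4,5,6,7,8,5,4,3,7,5,4,6,5,7,8],[2,3,4,5,6,7,5,8,4,7,3,5,4,6,5,7,8],[2,3,4,5,6,7,5,8,4,3,7,5,6,4,5,7,8],[2,3,4,5,6,7,5,4,8,7,5,3,4,6,5,7,8],[2,3,4,5,6,7,5,4,8,7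,3,5,6,4,5,7,8],[2,3,4,5,7,6,8,5,4,3,7,5,4,6,5,7,8],[2,3,4,5,7,6,5,8,4,7,3,5,4,6,5,7,8],[2,3,4,5,7,6,5,8,4,3,7,5,6,4,5,7,8],[2,3,4,5,7,6,5,4,8,7,5,3,4,6,5,7,8],[2,3,4,5,7,6,5,4,8,7,3,5,6,4,5,7,8],[2,3,4,5,6,7,8,5,4,7,3,5,4,6,5,7,8],[2,3,4,5,6,7,8,5,4,3,7,5,6,4,5,7,8],[2,3,4,5,6,7,5,8,7,4,3,5,4,6,5,7,8],[2,3,4,5,6,7,5,8,4,7,5,3,4,6,5,7,8],[2,3,4,5,6,7,5,8,4,7,3,5,6,4,5,7,8],[2,3,4,5,6,7,5,4,8,7,5,3,6,4,5,7,8],[2,3,4,5,7,8,6,5,4,3,7,5,4,6,5,7,8],[2,3,4,5,7,6,8,5,4,7,3,5,4,6,5,7,8],[2,3,4,5,7,6,8,5,4,3,7,5,6,4,5,7,8],[2,3,4,5,7,6,5,8,7,4,3,5,4,6,5,7,8],[2,3,4,5,7,6,5,8,4,7,5,3,4,6,5,7,8],[2,3,4,5,7,6,5,8,4,7,3,5,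6,4,5,7,8],[2,3,4,5,7,6,5,4,8,7,5,3,6,4,5,7,8],[2,3,4,5,6,7,8,5,7,4,3,5,4,6,5,7,8],[2,3,4,5,6,7,8,5,4,7,5,3,4,6,5,7,8],[2,3,4,5,6,7,8,5,4,7,3,5,6,4,5,7,8],[2,3,4,5,6,7,5,8,7,4,5,3,4,6,5,7,8],[2,3,4,5,6,7,5,8,7,4,3,5,6,4,5,7,8],[2,3,4,5,6,7,5,8,4,7,5,3,6,4,5,7,8],[2,3,4,5,6,7,5,4,8,7,5,6,3,4,5,7,8],[2,3,4,5,7,8,6,5,4,7,3,5,4,6,5,7,8],[2,3,4,5,7,8,6,5,4,3,7,5,6,4,5,7,8],[2,3,4,5,7,6,8,5,7,4,3,5,4,6,5,7,8],[2,3,4,5,7,6,8,5,4,7,5,3,4,6,5,7,8],[2,3,4,5,7,6,8,5,4,7,3,5,6,4,5,7,8],[2,3,4,5,7,6,5,8,7,4,5,3,4,6,5,7,8],[2,3,4,5,7,6,5,8,7,4,3,5,6,4,5,7,8],[2,3,4,5,7,6,5,8,4,7,5,3,6,4,5,7,8],[2,3,4,5,7,6,5,4,8,7,5,6,3,4,5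,7,8],[2,3,4,5,6,7,8,5,7,4,5,3,4,6,5,7,8],[2,3,4,5,6,7,8,5,7,4,3,5,6,4,5,7,8],[2,3,4,5,6,7,8,5,4,7,5,3,6,4,5,7,8],[2,3,4,5,6,7,5,8,7,4,5,3,6,4,5,7,8],[2,3,4,5,6,7,5,8,4,7,5,6,3,4,5,7,8],[2,3,4,5,7,8,6,5,7,4,3,5,4,6,5,7,8],[2,3,4,5,7,8,6,5,4,7,5,3,4,6,5,7,8],[2,3,4,5,7,8,6,5,4,7,3,5,6,4,5,7,8],[2,3,4,5,7,6,8,5,7,4,5,3,4,6,5,7,8],[2,3,4,5,7,6,8,5,7,4,3,5,6,4,5,7,8],[2,3,4,5,7,6,8,5,4,7,5,3,6,4,5,7,8],[2,3,4,5,7,6,5,8,7,4,5,3,6,4,5,7,8],[2,3,4,5,7,6,5,8,4,7,5,6,3,4,5,7,8],[2,3,4,5,6,7,8,5,7,4,5,3,6,4,5,7,8],[2,3,4,5,6,7,8,5,4,7,5,6,3,4,5,7,8],[2,3,4,5,6,7,5,8,7,4,5,6,3,4,5,7,8],[2,3,4,5,7,8,6,5,7,4,5,3,4,6,5,7,8]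,[2,3,4,5,7,8,6,5,7,4,3,5,6,4,5,7,8],[2,3,4,5,7,8,6,5,4,7,5,3,6,4,5,7,8],[2,3,4,5,7,6,8,5,7,4,5,3,6,4,5,7,8],[2,3,4,5,7,6,8,5,4,7,5,6,3,4,5,7,8],[2,3,4,5,7,6,5,8,7,4,5,6,3,4,5,7,8],[2,3,4,5,6,7,8,5,7,4,5,6,3,4,5,7,8],[2,3,4,5,7,8,6,5,7,4,5,3,6,4,5,7,8],[2,3,4,5,7,8,6,5,4,7,5,6,3,4,5,7,8],[2,3,4,5,7,6,8,5,7,4,5,6,3,4,5,7,8],[2,3,4,5,7,8,6,5,7,4,5,6,3,4,5,7,8]]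

def ordJ_E8 : List (List ℕ) := [[2,3,4,5,6,7,5,4,3],[2,3,4,5,7,6,5,4,3]]

lemma I01_sub (c : AffCase) : ∀ i, i ∈ I01 c → i ∈ I0 c := by
  intro i hi
  simp only [I01, I0, Finset.mem_Icc] at *
  omega


lemma uniqI_F4 : ∀ l, IsISeqL AffCase.F4 l → l = [2,3,4] := by
  intro l hl
  obtain ⟨L, hlen, hI, h0, hp, hfin⟩ := hl
  have := master AffCase.F4 [2,3,4] (I01 AffCase.F4) 2 (theta1 AffCase.F4) [[2,3,4]]
    (I01_sub AffCase.F4)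
    (by intro i hi; simp only [I01, Finset.mem_Icc, rank] at hi; simp; omega)
    (by decide) (by decide) (by decide) hlen hI h0 hp hfin
  exact List.mem_singleton.1 this.1


lemma uniqJ_F4 : ∀ l, IsJSeqL AffCase.F4 l → l = [2,3] := by
  intro l hl
  obtain ⟨L, hlen, hI, h0, hp, hfin⟩ := hl
  have := master AffCase.F4 [2,3] (Jset AffCase.F4) 1 (thetaJ AffCase.F4) [[2,3]]
    (by intro i hi; fin_cases hi <;> decide)
    (by intro i hi; fin_cases hi <;> decide)
    (by decide) (by decide) (by decide) hlen hI h0 hp hfin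
  exact List.mem_singleton.1 this.1


lemma uniqI_E62 : ∀ l, IsISeqL AffCase.E62 l → l = [2,3,4] := by
  intro l hl
  obtain ⟨L, hlen, hI, h0, hp, hfin⟩ := hl
  have := master AffCase.E62 [2,3,4] (I01 AffCase.E62) 2 (theta1 AffCase.E62) [[2,3,4]]
    (I01_sub AffCase.E62)
    (by intro i hi; simp only [I01, Finset.mem_Icc, rank] at hi; simp; omega)
    (by decide) (by decide) (by decide) hlen hI h0 hp hfin
  exact List.mem_singleton.1 this.1


lemma uniqJ_E62 : ∀ l, IsJSeqL AffCase.E62 l → l = [2,3] := by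
  intro l hl
  obtain ⟨L, hlen, hI, h0, hp, hfin⟩ := hl
  have := master AffCase.E62 [2,3] (Jset AffCase.E62) 1 (thetaJ AffCase.E62) [[2,3]]
    (by intro i hi; fin_cases hi <;> decide)
    (by intro i hi; fin_cases hi <;> decide)
    (by decide) (by decide) (by decide) hlen hI h0 hp hfin
  exact List.mem_singleton.1 this.1


lemma memI_E6 : ∀ l, IsISeqL AffCase.E6 l → l ∈ ordI_E6 ∧ l.length = 4 + 1 := by
  intro l hl
  obtain ⟨L, hlen, hI, h0, hp, hfin⟩ := hl
  exact master AffCase.E6 [2,3,4,5,6] (I01 AffCase.E6) 4 (theta1 AffCase.E6) ordI_E6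
    (I01_sub AffCase.E6)
    (by intro i hi; simp only [I01, Finset.mem_Icc, rank] at hi; simp; omega)
    (by decide) (by decide) (by decide) hlen hI h0 hp hfin

lemma chainI_E6 : chainOK AffCase.E6 [ordI_E6.headI] ordI_E6.tail = true := by decide

lemma connI_E6 : ∀ l l', IsISeqL AffCase.E6 l → IsISeqL AffCase.E6 l' →
    l.length = l'.length ∧ Relation.ReflTransGen (CommStep AffCase.E6) l l' := by
  intro l l' hl hl'
  obtain ⟨hm, hL⟩ := memI_E6 l hl
  obtain ⟨hm', hL'⟩ := memI_E6 l' hl'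
  have e : ordI_E6 = ordI_E6.headI :: ordI_E6.tail := rfl
  exact ⟨hL.trans hL'.symm,
    connect AffCase.E6 ordI_E6.headI ordI_E6.tail chainI_E6 (e ▸ hm) (e ▸ hm')⟩


lemma memJ_E6 : ∀ l, IsJSeqL AffCase.E6 l → l ∈ ordJ_E6 ∧ l.length = 2 + 1 := by
  intro l hl
  obtain ⟨L, hlen, hI, h0, hp, hfin⟩ := hl
  exact master AffCase.E6 [2,3,4] (Jset AffCase.E6) 2 (thetaJ AffCase.E6) ordJ_E6
    (by intro i hi; fin_cases hi <;> decide)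
    (by intro i hi; fin_cases hi <;> decide)
    (by decide) (by decide) (by decide) hlen hI h0 hp hfin

lemma chainJ_E6 : chainOK AffCase.E6 [ordJ_E6.headI] ordJ_E6.tail = true := by decide

lemma connJ_E6 : ∀ l l', IsJSeqL AffCase.E6 l → IsJSeqL AffCase.E6 l' →
    l.length = l'.length ∧ Relation.ReflTransGen (CommStep AffCase.E6) l l' := by
  intro l l' hl hl'
  obtain ⟨hm, hL⟩ := memJ_E6 l hl
  obtain ⟨hm', hL'⟩ := memJ_E6 l' hl'
  have e : ordJ_E6 = ordJ_E6.headI :: ordJ_E6.tail := rfl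
  exact ⟨hL.trans hL'.symm,
    connect AffCase.E6 ordJ_E6.headI ordJ_E6.tail chainJ_E6 (e ▸ hm) (e ▸ hm')⟩


lemma memI_E7 : ∀ l, IsISeqL AffCase.E7 l → l ∈ ordI_E7 ∧ l.length = 8 + 1 := by
  intro l hl
  obtain ⟨L, hlen, hI, h0, hp, hfin⟩ := hl
  exact master AffCase.E7 [2,3,4,5,6,7] (I01 AffCase.E7) 8 (theta1 AffCase.E7) ordI_E7
    (I01_sub AffCase.E7)
    (by intro i hi; simp only [I01, Finset.mem_Icc, rank] at hi; simp; omega)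
    (by decide) (by decide) (by decide) hlen hI h0 hp hfin

lemma chainI_E7 : chainOK AffCase.E7 [ordI_E7.headI] ordI_E7.tail = true := by decide

lemma connI_E7 : ∀ l l', IsISeqL AffCase.E7 l → IsISeqL AffCase.E7 l' →
    l.length = l'.length ∧ Relation.ReflTransGen (CommStep AffCase.E7) l l' := by
  intro l l' hl hl'
  obtain ⟨hm, hL⟩ := memI_E7 l hl
  obtain ⟨hm', hL'⟩ := memI_E7 l' hl'
  have e : ordI_E7 = ordI_E7.headI :: ordI_E7.tail := rfl
  exact ⟨hL.trans hL'.symm,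
    connect AffCase.E7 ordI_E7.headI ordI_E7.tail chainI_E7 (e ▸ hm) (e ▸ hm')⟩


lemma memJ_E7 : ∀ l, IsJSeqL AffCase.E7 l → l ∈ ordJ_E7 ∧ l.length = 4 + 1 := by
  intro l hl
  obtain ⟨L, hlen, hI, h0, hp, hfin⟩ := hl
  exact master AffCase.E7 [2,3,4,5] (Jset AffCase.E7) 4 (thetaJ AffCase.E7) ordJ_E7
    (by intro i hi; fin_cases hi <;> decide)
    (by intro i hi; fin_cases hi <;> decide)
    (by decide) (by decide) (by decide) hlen hI h0 hp hfin

lemma chainJ_E7 : chainOK AffCase.E7 [ordJ_E7.headI] ordJ_E7.tail = true := by decide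

lemma connJ_E7 : ∀ l l', IsJSeqL AffCase.E7 l → IsJSeqL AffCase.E7 l' →
    l.length = l'.length ∧ Relation.ReflTransGen (CommStep AffCase.E7) l l' := by
  intro l l' hl hl'
  obtain ⟨hm, hL⟩ := memJ_E7 l hl
  obtain ⟨hm', hL'⟩ := memJ_E7 l' hl'
  have e : ordJ_E7 = ordJ_E7.headI :: ordJ_E7.tail := rfl
  exact ⟨hL.trans hL'.symm,
    connect AffCase.E7 ordJ_E7.headI ordJ_E7.tail chainJ_E7 (e ▸ hm) (e ▸ hm')⟩


lemma memI_E8 : ∀ l, IsISeqL AffCase.E8 l → l ∈ ordI_E8 ∧ l.length = 16 + 1 := by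
  intro l hl
  obtain ⟨L, hlen, hI, h0, hp, hfin⟩ := hl
  exact master AffCase.E8 [2,3,4,5,6,7,8] (I01 AffCase.E8) 16 (theta1 AffCase.E8) ordI_E8
    (I01_sub AffCase.E8)
    (by intro i hi; simp only [I01, Finset.mem_Icc, rank] at hi; simp; omega)
    (by decide) (by decide) (by decide) hlen hI h0 hp hfin

lemma chainI_E8 : chainOK AffCase.E8 [ordI_E8.headI] ordI_E8.tail = true := by decide

lemma connI_E8 : ∀ l l', IsISeqL AffCase.E8 l → IsISeqL AffCase.E8 l' →
    l.length = l'.length ∧ Relation.ReflTransGen (CommStep AffCase.E8) l l' := by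
  intro l l' hl hl'
  obtain ⟨hm, hL⟩ := memI_E8 l hl
  obtain ⟨hm', hL'⟩ := memI_E8 l' hl'
  have e : ordI_E8 = ordI_E8.headI :: ordI_E8.tail := rfl
  exact ⟨hL.trans hL'.symm,
    connect AffCase.E8 ordI_E8.headI ordI_E8.tail chainI_E8 (e ▸ hm) (e ▸ hm')⟩


lemma memJ_E8 : ∀ l, IsJSeqL AffCase.E8 l → l ∈ ordJ_E8 ∧ l.length = 8 + 1 := by
  intro l hl
  obtain ⟨L, hlen, hI, h0, hp, hfin⟩ := hl
  exact master AffCase.E8 [2,3,4,5,6,7] (Jset AffCase.E8) 8 (thetaJ AffCase.E8) ordJ_E8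
    (by intro i hi; fin_cases hi <;> decide)
    (by intro i hi; fin_cases hi <;> decide)
    (by decide) (by decide) (by decide) hlen hI h0 hp hfin

lemma chainJ_E8 : chainOK AffCase.E8 [ordJ_E8.headI] ordJ_E8.tail = true := by decide

lemma connJ_E8 : ∀ l l', IsJSeqL AffCase.E8 l → IsJSeqL AffCase.E8 l' →
    l.length = l'.length ∧ Relation.ReflTransGen (CommStep AffCase.E8) l l' := by
  intro l l' hl hl'
  obtain ⟨hm, hL⟩ := memJ_E8 l hl
  obtain ⟨hm', hL'⟩ := memJ_E8 l' hl'
  have e : ordJ_E8 = ordJ_E8.headI :: ordJ_E8.tail := rfl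
  exact ⟨hL.trans hL'.symm,
    connect AffCase.E8 ordJ_E8.headI ordJ_E8.tail chainJ_E8 (e ▸ hm) (e ▸ hm')⟩


lemma exI_F4 : IsISeqL AffCase.F4 [2,3,4] := by
  refine ⟨2, rfl, ⟨?_, rfl, ?_, ?_⟩⟩
  · intro k hk; interval_cases k <;> decide
  · intro k h1 h2; interval_cases k <;> decide
  · refine final_ext AffCase.F4 2 _ _ ?_ ?_ (theta1_vanish AffCase.F4)
    · intro j hj; simp only [rank] at hj; interval_cases j <;> decide
    · intro k h1 h2; interval_cases k <;> decide


lemma exJ_F4 : IsJSeqL AffCase.F4 [2,3] := by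
  refine ⟨1, rfl, ⟨?_, rfl, ?_, ?_⟩⟩
  · intro k hk; interval_cases k <;> decide
  · intro k h1 h2; interval_cases k <;> decide
  · refine final_ext AffCase.F4 1 _ _ ?_ ?_ (thetaJ_vanish AffCase.F4)
    · intro j hj; simp only [rank] at hj; interval_cases j <;> decide
    · intro k h1 h2; interval_cases k <;> decide


lemma exI_E62 : IsISeqL AffCase.E62 [2,3,4] := by
  refine ⟨2, rfl, ⟨?_, rfl, ?_, ?_⟩⟩
  · intro k hk; interval_cases k <;> decide
  · intro k h1 h2; interval_cases k <;> decide
  · refine final_ext AffCase.E62 2 _ _ ?_ ?_ (theta1_vanish AffCase.E62)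
    · intro j hj; simp only [rank] at hj; interval_cases j <;> decide
    · intro k h1 h2; interval_cases k <;> decide


lemma exJ_E62 : IsJSeqL AffCase.E62 [2,3] := by
  refine ⟨1, rfl, ⟨?_, rfl, ?_, ?_⟩⟩
  · intro k hk; interval_cases k <;> decide
  · intro k h1 h2; interval_cases k <;> decide
  · refine final_ext AffCase.E62 1 _ _ ?_ ?_ (thetaJ_vanish AffCase.E62)
    · intro j hj; simp only [rank] at hj; interval_cases j <;> decide
    · intro k h1 h2; interval_cases k <;> decide


theorem stmt6 :
    (∀ c : AffCase, (c = AffCase.F4 ∨ c = AffCase.E62) →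
      (IsISeqL c [2,3,4] ∧ ∀ l, IsISeqL c l → l = [2,3,4]) ∧
      (IsJSeqL c [2,3] ∧ ∀ l, IsJSeqL c l → l = [2,3])) ∧
    (∀ c : AffCase, (c = AffCase.E6 ∨ c = AffCase.E7 ∨ c = AffCase.E8) →
      (∀ l l', IsISeqL c l → IsISeqL c l' →
        l.length = l'.length ∧ Relation.ReflTransGen (CommStep c) l l') ∧
      (∀ l l', IsJSeqL c l → IsJSeqL c l' →
        l.length = l'.length ∧ Relation.ReflTransGen (CommStep c) l l')) := by
  constructor
  · rintro c (rfl | rfl)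
    · exact ⟨⟨exI_F4, uniqI_F4⟩, ⟨exJ_F4, uniqJ_F4⟩⟩
    · exact ⟨⟨exI_E62, uniqI_E62⟩, ⟨exJ_E62, uniqJ_E62⟩⟩
  · rintro c (rfl | rfl | rfl)
    · exact ⟨connI_E6, connJ_E6⟩
    · exact ⟨connI_E7, connJ_E7⟩
    · exact ⟨connI_E8, connJ_E8⟩
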